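/- Let M be a commutative monoid which is not a group, and let a be a non-invertible element of M. Let M/∼_m be the quotient M-set of M obtained by identifying all non-invertible elements to a single point. Then (M/∼_m) ⊗_M M_a is a one-element set (the trivial M_a-set), while M/∼_m is not a one-element set. Consequently, the family of localizations at non-invertible elements does not reflect isomorphisms of M-sets. -/

import Mathlib

open Relation

section
variable {M N : Type} [CommMonoid M] [CommMonoid N]

/-- Generating relation for `T ⊗_M N` along `φ : M →* N`: `(m • t, n) ∼ (t, φ(m) n)`. -/
inductive TensorRel (φ : M →* N) (T : Type) [MulAction M T] : T × N → T × N → Prop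
  | mk (m : M) (t : T) (n : N) : TensorRel φ T (m • t, n) (t, φ m * n)

/-- The base change `T ⊗_M N` of the `M`-set `T` along `φ : M →* N`. -/
abbrev MTensor (φ : M →* N) (T : Type) [MulAction M T] : Type :=
  Quotient (EqvGen.setoid (TensorRel φ T))

/-- The map `T ⊗_M N → U ⊗_M N` induced by a map of `M`-sets `f : T → U`. -/
def MTensor.map (φ : M →* N) {T U : Type} [MulAction M T] [MulAction M U]
    (f : T →[M] U) : MTensor φ T → MTensor φ U :=
  Quotient.lift (fun p => Quotient.mk (EqvGen.setoid (TensorRel φ U)) (f p.1, p.2)) (by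
    intro a b h
    induction h with
    | rel x y hxy =>
      obtain ⟨m, t, n⟩ := hxy
      refine Quotient.sound ?_
      show EqvGen (TensorRel φ U) (f (m • t), n) (f t, φ m * n)
      rw [map_smul]
      exact EqvGen.rel _ _ (TensorRel.mk m (f t) n)
    | refl x => rfl
    | symm x y _ ih => exact ih.symm
    | trans x y z _ _ ih₁ ih₂ => exact ih₁.trans ih₂)

end

section
variable (M : Type) [CommMonoid M]

/-- The equivalence relation on `M` identifying all non-invertible elements
(the elements of the maximal ideal `M \ M^×`). -/
def nonunitSetoid : Setoid M where
  r x y := x = y ∨ (¬ IsUnit x ∧ ¬ IsUnit y)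
  iseqv := by
    constructor
    · exact fun x => Or.inl rfl
    · rintro x y (rfl | ⟨h1, h2⟩)
      · exact Or.inl rfl
      · exact Or.inr ⟨h2, h1⟩
    · rintro x y z (rfl | ⟨h1, h2⟩) (rfl | ⟨h3, h4⟩)
      · exact Or.inl rfl
      · exact Or.inr ⟨h3, h4⟩
      · exact Or.inr ⟨h1, h2⟩
      · exact Or.inr ⟨h1, h4⟩

/-- The quotient `M`-set `M/∼ₘ` of `M` identifying all non-invertible elements. -/
def NonunitQuot : Type := Quotient (nonunitSetoid M)

/-- `M/∼ₘ` is an `M`-set. -/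
instance : MulAction M (NonunitQuot M) where
  smul m := Quotient.map (fun x => m * x) (by
    rintro x y (rfl | ⟨hx, hy⟩)
    · exact Or.inl rfl
    · exact Or.inr ⟨fun h => hx (isUnit_of_mul_isUnit_right h),
        fun h => hy (isUnit_of_mul_isUnit_right h)⟩)
  one_smul := by
    rintro ⟨x⟩
    exact congrArg (Quotient.mk _) (one_mul x)
  mul_smul a b := by
    rintro ⟨x⟩
    exact congrArg (Quotient.mk _) (mul_assoc a b x)

/-- The unique map of `M`-sets from `M/∼ₘ` to the one-point `M`-set. -/
def termHom : NonunitQuot M →[M] PUnit :=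
  ⟨fun _ => PUnit.unit, fun _ _ => rfl⟩

/-- The canonical map `M → M_b` to the localization at an element `b`. -/
noncomputable def toAway (b : M) : M →* Localization (Submonoid.powers b) :=
  (Localization.monoidOf (Submonoid.powers b)).toMonoidHom

end


section Aux

variable (M : Type) [CommMonoid M]

lemma toAway_eq_mk (b x : M) : toAway M b x = Localization.mk x 1 :=
  (Localization.mk_one_eq_monoidOf_mk (S := Submonoid.powers b) x).symm

lemma nq_mk_eq {x y : M} (hx : ¬ IsUnit x) (hy : ¬ IsUnit y) :
    Quotient.mk (nonunitSetoid M) x = Quotient.mk (nonunitSetoid M) y :=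
  Quotient.sound (Or.inr ⟨hx, hy⟩)

lemma mtensor_nq_step2 (b : M) (hb : ¬ IsUnit b) (x : Localization (Submonoid.powers b)) :
    EqvGen (TensorRel (toAway M b) (NonunitQuot M))
      (Quotient.mk (nonunitSetoid M) 1, x) (Quotient.mk (nonunitSetoid M) 1, 1) := by
  induction x using Localization.ind with
  | _ p =>
    obtain ⟨r, s⟩ := p
    set s' : Submonoid.powers b := s * ⟨b, Submonoid.mem_powers b⟩ with hs'
    have hs'1 : (s' : M) = (s : M) * b := rfl
    have hmnu : ¬ IsUnit (r * b) := fun h => hb (isUnit_of_mul_isUnit_right h)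
    have hs'nu : ¬ IsUnit ((s' : M)) := by
      rw [hs'1]; exact fun h => hb (isUnit_of_mul_isUnit_right h)
    have key1 : Localization.mk r s = toAway M b (r * b) * Localization.mk 1 s' := by
      rw [toAway_eq_mk, Localization.mk_mul, mul_one, one_mul]
      exact Localization.mk_eq_mk_iff.mpr (Localization.r_iff_exists.mpr
        ⟨1, by simp [hs'1, mul_comm, mul_left_comm, mul_assoc]⟩)
    have key2 : toAway M b ((s' : M)) * Localization.mk 1 s' = 1 := by
      rw [toAway_eq_mk, Localization.mk_mul, mul_one, one_mul, Localization.mk_self]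
    have e1 : EqvGen (TensorRel (toAway M b) (NonunitQuot M))
        (Quotient.mk (nonunitSetoid M) (r * b), Localization.mk 1 s')
        (Quotient.mk (nonunitSetoid M) 1, Localization.mk r s) := by
      rw [key1]
      have := EqvGen.rel _ _
        (TensorRel.mk (φ := toAway M b) (T := NonunitQuot M) (r * b) (Quotient.mk (nonunitSetoid M) 1)
          (Localization.mk 1 s'))
      convert this using 2
      exact Prod.ext (congrArg (Quotient.mk (nonunitSetoid M)) (mul_one _)).symm rfl
    have e3 : EqvGen (TensorRel (toAway M b) (NonunitQuot M))
        (Quotient.mk (nonunitSetoid M) ((s' : M)), Localization.mk 1 s')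
        (Quotient.mk (nonunitSetoid M) 1, 1) := by
      rw [← key2]
      have := EqvGen.rel _ _
        (TensorRel.mk (φ := toAway M b) (T := NonunitQuot M) ((s' : M)) (Quotient.mk (nonunitSetoid M) 1)
          (Localization.mk 1 s'))
      convert this using 2
      exact Prod.ext (congrArg (Quotient.mk (nonunitSetoid M)) (mul_one _)).symm rfl
    have e2 : (Quotient.mk (nonunitSetoid M) (r * b), Localization.mk 1 s') =
        (Quotient.mk (nonunitSetoid M) ((s' : M)), Localization.mk 1 s') := by
      rw [nq_mk_eq M hmnu hs'nu]
    exact (EqvGen.symm _ _ e1).trans _ _ _ (e2 ▸ e3)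

lemma mtensor_nq_eq (b : M) (hb : ¬ IsUnit b)
    (z : MTensor (toAway M b) (NonunitQuot M)) :
    z = Quotient.mk _ (Quotient.mk (nonunitSetoid M) 1, 1) := by
  induction z using Quotient.ind with
  | _ p =>
    obtain ⟨t, n⟩ := p
    induction t using Quotient.ind with
    | _ m =>
      refine Quotient.sound ?_
      have e0 : EqvGen (TensorRel (toAway M b) (NonunitQuot M))
          (Quotient.mk (nonunitSetoid M) m, n)
          (Quotient.mk (nonunitSetoid M) 1, toAway M b m * n) := by
        have := EqvGen.rel _ _
          (TensorRel.mk (φ := toAway M b) (T := NonunitQuot M) m (Quotient.mk (nonunitSetoid M) 1) n)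
        convert this using 2
        exact Prod.ext (congrArg (Quotient.mk (nonunitSetoid M)) (mul_one _)).symm rfl
      exact e0.trans _ _ _ (mtensor_nq_step2 M b hb _)

lemma mtensor_punit_eq (b : M) (z : MTensor (toAway M b) PUnit) :
    z = Quotient.mk _ (PUnit.unit, 1) := by
  induction z using Quotient.ind with
  | _ p =>
    obtain ⟨t, n⟩ := p
    induction n using Localization.ind with
    | _ q =>
      obtain ⟨r, s⟩ := q
      refine Quotient.sound ?_
      have hsm : ∀ (m : M), m • PUnit.unit = PUnit.unit := fun _ => rfl
      have e1 : EqvGen (TensorRel (toAway M b) PUnit)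
          (PUnit.unit, Localization.mk 1 s) (PUnit.unit, Localization.mk r s) := by
        have := EqvGen.rel _ _
          (TensorRel.mk (φ := toAway M b) r PUnit.unit (Localization.mk 1 s))
        rwa [hsm, toAway_eq_mk, Localization.mk_mul, mul_one, one_mul] at this
      have e2 : EqvGen (TensorRel (toAway M b) PUnit)
          (PUnit.unit, Localization.mk 1 s) (PUnit.unit, 1) := by
        have := EqvGen.rel _ _
          (TensorRel.mk (φ := toAway M b) ((s : M)) PUnit.unit (Localization.mk 1 s))
        rwa [hsm, toAway_eq_mk, Localization.mk_mul, mul_one, one_mul,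
          Localization.mk_self] at this
      have : t = PUnit.unit := rfl
      rw [this]
      exact (EqvGen.symm _ _ e1).trans _ _ _ e2

end Aux

/-- If `M` is not a group and `a ∈ M` is non-invertible, then `(M/∼ₘ) ⊗_M M_a` is a
one-element set while `M/∼ₘ` is not; consequently the family of localizations of `M` at
its non-invertible elements does not reflect isomorphisms of `M`-sets: the map
`M/∼ₘ → {*}` is not bijective, yet all its base changes to the `M_b` (`b` non-invertible)
are bijective. -/
theorem quotient_tensor_localization_trivial (M : Type) [CommMonoid M]
    (hng : ¬ ∀ m : M, IsUnit m) (a : M) (ha : ¬ IsUnit a) :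
    (Nonempty (MTensor (toAway M a) (NonunitQuot M)) ∧
      Subsingleton (MTensor (toAway M a) (NonunitQuot M))) ∧
    (∃ x y : NonunitQuot M, x ≠ y) ∧
    (¬ Function.Bijective (termHom M)) ∧
    (∀ b : M, ¬ IsUnit b →
      Function.Bijective (MTensor.map (toAway M b) (termHom M))) := by
  obtain ⟨m, hm⟩ := not_forall.mp hng
  have hne : (Quotient.mk (nonunitSetoid M) 1 : NonunitQuot M) ≠ Quotient.mk (nonunitSetoid M) m := by
    intro h
    rcases Quotient.exact h with h' | ⟨h1, _⟩
    · exact hm (h' ▸ isUnit_one)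
    · exact h1 isUnit_one
  refine ⟨⟨⟨Quotient.mk _ (Quotient.mk (nonunitSetoid M) 1, 1)⟩,
    ⟨fun x y => (mtensor_nq_eq M a ha x).trans (mtensor_nq_eq M a ha y).symm⟩⟩,
    ⟨_, _, hne⟩, ?_, ?_⟩
  · intro h
    exact hne (h.injective (Subsingleton.elim _ _))
  · intro b hb
    constructor
    · intro x y _
      exact (mtensor_nq_eq M b hb x).trans (mtensor_nq_eq M b hb y).symm
    · intro y
      refine ⟨Quotient.mk _ (Quotient.mk (nonunitSetoid M) 1, 1), ?_⟩
      exact ((mtensor_punit_eq M b _).trans (mtensor_punit_eq M b y).symm)
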